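/- Let X be a locally compact metrisable space with pairwise commuting continuous maps φ₁,…,φ_d : X → X and let J ⊆ {1,…,d}. Then the closure C of the set X_{Jr} of J-recurrent points is a closed invariant set with N_J(C) = C (the subsystem on C has no J-wandering points), and every closed invariant set Y ⊆ X with N_J(Y) = Y satisfies Y ⊆ C. In other words, the closure of X_{Jr} is the largest closed invariant subset of X whose subsystem has no J-wandering points. -/

import Mathlib

open Filter Topology Set

/-- `phiIter φ n = φ₁^[n₁] ∘ ⋯ ∘ φ_d^[n_d]`. -/
def phiIter {X : Type*} {d : ℕ} (φ : Fin d → X → X) (n : Fin d → ℕ) : X → X :=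
  (List.ofFn fun j : Fin d => (φ j)^[n j]).foldr (· ∘ ·) id

/-- A point is `J`-recurrent if `φ_{n_k}(x) → x` along a sequence strictly
increasing in the directions of `J`. -/
def JRecurrent {X : Type*} [TopologicalSpace X] {d : ℕ} (φ : Fin d → X → X)
    (J : Set (Fin d)) (x : X) : Prop :=
  ∃ n : ℕ → Fin d → ℕ, (∀ j ∈ J, StrictMono fun k => n k j) ∧
    Tendsto (fun k => phiIter φ (n k) x) atTop (𝓝 x)

/-- `NJ φ J Y` is the set of points of `Y` which are *not* `J`-wandering for the
subsystem on `Y`: every open neighbourhood `V` of such a point admits some `n ∈ Σ_J`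
and `z ∈ V ∩ Y` with `φ_n(z) ∈ V ∩ Y`. -/
def NJ {X : Type*} [TopologicalSpace X] {d : ℕ} (φ : Fin d → X → X)
    (J : Set (Fin d)) (Y : Set X) : Set X :=
  {y ∈ Y | ∀ V : Set X, IsOpen V → y ∈ V →
    ∃ n : Fin d → ℕ, (∀ j ∈ J, 0 < n j) ∧ ∃ z ∈ V ∩ Y, phiIter φ n z ∈ V ∩ Y}

lemma phiIter_succ {X : Type*} {d : ℕ} (φ : Fin (d+1) → X → X) (n : Fin (d+1) → ℕ) :
    phiIter φ n = (φ 0)^[n 0] ∘ phiIter (fun j => φ j.succ) (fun j => n j.succ) := by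
  simp [phiIter, List.ofFn_succ]

lemma commute_phiIter {X : Type*} {d : ℕ} (φ : Fin d → X → X) (g : X → X)
    (h : ∀ j, Function.Commute g (φ j)) (n : Fin d → ℕ) :
    Function.Commute g (phiIter φ n) := by
  induction d with
  | zero => exact fun x => rfl
  | succ d ih =>
    rw [phiIter_succ]
    exact ((h 0).iterate_right _).comp_right (ih _ (fun j => h j.succ) _)

lemma continuous_phiIter {X : Type*} [TopologicalSpace X] {d : ℕ} (φ : Fin d → X → X)
    (hcont : ∀ j, Continuous (φ j)) (n : Fin d → ℕ) : Continuous (phiIter φ n) := by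
  induction d with
  | zero => simpa [phiIter] using continuous_id
  | succ d ih =>
    rw [phiIter_succ]
    exact ((hcont 0).iterate _).comp (ih _ (fun j => hcont j.succ) _)

lemma phiIter_add {X : Type*} {d : ℕ} (φ : Fin d → X → X)
    (hcomm : ∀ i j, Function.Commute (φ i) (φ j)) (n m : Fin d → ℕ) :
    phiIter φ (n + m) = phiIter φ n ∘ phiIter φ m := by
  induction d with
  | zero => simp [phiIter]
  | succ d ih =>
    rw [phiIter_succ, phiIter_succ, phiIter_succ]
    have hc : Function.Commute ((φ 0)^[m 0]) (phiIter (fun j => φ j.succ) (fun j => n j.succ)) :=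
      commute_phiIter _ _ (fun j => ((hcomm j.succ 0).symm.iterate_left _)) _
    have := ih (fun j => φ j.succ) (fun i j => hcomm i.succ j.succ) (fun j => n j.succ) (fun j => m j.succ)
    funext x
    simp only [Pi.add_apply, Function.comp_apply, Function.iterate_add_apply]
    have h2 : phiIter (fun j => φ j.succ) (fun j => n j.succ + m j.succ) x
        = phiIter (fun j => φ j.succ) (fun j => n j.succ) (phiIter (fun j => φ j.succ) (fun j => m j.succ) x) := by
      have := congrFun this x
      exact this
    rw [h2]
    exact congrArg _ (hc _)

lemma phiIter_comm {X : Type*} {d : ℕ} (φ : Fin d → X → X)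
    (hcomm : ∀ i j, Function.Commute (φ i) (φ j)) (n m : Fin d → ℕ) :
    phiIter φ n ∘ phiIter φ m = phiIter φ m ∘ phiIter φ n := by
  rw [← phiIter_add φ hcomm, ← phiIter_add φ hcomm, add_comm]

section
variable {X : Type*} [TopologicalSpace X] {d : ℕ} {φ : Fin d → X → X}
  (hcont : ∀ j, Continuous (φ j)) (hcomm : ∀ i j, Function.Commute (φ i) (φ j))
  {J : Set (Fin d)}
include hcont hcomm

lemma jrecurrent_invariant (m : Fin d → ℕ) {x : X} (hx : JRecurrent φ J x) :
    JRecurrent φ J (phiIter φ m x) := by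
  obtain ⟨n, hmono, htend⟩ := hx
  refine ⟨n, hmono, ?_⟩
  have : ∀ k, phiIter φ (n k) (phiIter φ m x) = phiIter φ m (phiIter φ (n k) x) := fun k =>
    congrFun (phiIter_comm φ hcomm (n k) m) x
  simp only [this]
  exact ((continuous_phiIter φ hcont m).tendsto x).comp htend

/-- returns with arbitrarily large J-coordinates in a non-wandering invariant system -/
lemma returns (Y : Set X) (hinv : ∀ n : Fin d → ℕ, phiIter φ n '' Y ⊆ Y)
    (hNJ : NJ φ J Y = Y) {U : Set X} (hU : IsOpen U) (hne : (U ∩ Y).Nonempty) (m : ℕ) :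
    ∃ n : Fin d → ℕ, (∀ j ∈ J, m ≤ n j) ∧ ∃ z ∈ U ∩ Y, phiIter φ n z ∈ U ∩ Y := by
  induction m with
  | zero =>
    obtain ⟨y, hyU, hyY⟩ := hne
    have hy : y ∈ NJ φ J Y := hNJ.ge hyY
    obtain ⟨n, hpos, hz⟩ := hy.2 U hU hyU
    exact ⟨n, fun j _ => Nat.zero_le _, hz⟩
  | succ m ih =>
    obtain ⟨n, hn, z, hzUY, hfz⟩ := ih
    set U' := U ∩ phiIter φ n ⁻¹' U with hU'
    have hU'open : IsOpen U' := hU.inter ((continuous_phiIter φ hcont n).isOpen_preimage U hU)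
    have hzU' : z ∈ U' := ⟨hzUY.1, hfz.1⟩
    have hz' : z ∈ NJ φ J Y := hNJ.ge hzUY.2
    obtain ⟨n', hpos, w, hwU'Y, hfw⟩ := hz'.2 U' hU'open hzU'
    refine ⟨n + n', fun j hj => ?_, w, ⟨hwU'Y.1.1, hwU'Y.2⟩, ?_⟩
    · have := hn j hj; have := hpos j hj; simp only [Pi.add_apply]; omega
    · have heq : phiIter φ (n + n') w = phiIter φ n (phiIter φ n' w) :=
        congrFun (phiIter_add φ hcomm n n') w
      rw [heq]
      exact ⟨hfw.1.2, hinv n (mem_image_of_mem _ hfw.2)⟩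

end

lemma jrecurrent_of_small_returns {X : Type*} [MetricSpace X] {d : ℕ} (φ : Fin d → X → X)
    (J : Set (Fin d)) (x : X)
    (h : ∀ m : ℕ, ∃ n : Fin d → ℕ, (∀ j ∈ J, m + 1 ≤ n j) ∧
      dist (phiIter φ n x) x < 1 / (m + 1)) : JRecurrent φ J x := by
  choose g hg1 hg2 using h
  let M : ℕ → ℕ := fun k => Nat.rec 0 (fun _ Mk => Mk + Finset.univ.sup (g Mk) + 1) k
  have hMsucc : ∀ k, M (k + 1) = M k + Finset.univ.sup (g (M k)) + 1 := fun _ => rfl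
  have hMk : ∀ k, k ≤ M k := by
    intro k; induction k with
    | zero => exact Nat.zero_le _
    | succ k ih => rw [hMsucc]; omega
  refine ⟨fun k => g (M k), fun j hj => strictMono_nat_of_lt_succ fun k => ?_, ?_⟩
  · have h1 : g (M k) j ≤ Finset.univ.sup (g (M k)) := Finset.le_sup (Finset.mem_univ j)
    have h2 : M (k + 1) + 1 ≤ g (M (k + 1)) j := hg1 _ j hj
    have := hMsucc k
    show g (M k) j < g (M (k + 1)) j
    omega
  · rw [tendsto_iff_dist_tendsto_zero]
    refine squeeze_zero (fun k => dist_nonneg) (fun k => ?_)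
      tendsto_one_div_add_atTop_nhds_zero_nat
    refine le_trans (le_of_lt (hg2 (M k))) (one_div_le_one_div_of_le (by positivity) ?_)
    have := hMk k
    exact_mod_cast by exact_mod_cast Nat.add_le_add_right this 1
/-- Lemma 14(ii) (`cent1`): the closure of the `J`-recurrent points is the largest
closed invariant subset of `X` whose subsystem has no `J`-wandering points. -/
theorem closure_JRecurrent_largest {X : Type*} [TopologicalSpace X]
    [LocallyCompactSpace X] [TopologicalSpace.MetrizableSpace X] {d : ℕ}
    (φ : Fin d → X → X) (hcont : ∀ j, Continuous (φ j))
    (hcomm : ∀ i j, Function.Commute (φ i) (φ j)) (J : Set (Fin d)) :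
    IsClosed (closure {x : X | JRecurrent φ J x}) ∧
    (∀ n : Fin d → ℕ,
      phiIter φ n '' closure {x : X | JRecurrent φ J x} ⊆ closure {x : X | JRecurrent φ J x}) ∧
    NJ φ J (closure {x : X | JRecurrent φ J x}) = closure {x : X | JRecurrent φ J x} ∧
    ∀ Y : Set X, IsClosed Y → (∀ n : Fin d → ℕ, phiIter φ n '' Y ⊆ Y) →
      NJ φ J Y = Y → Y ⊆ closure {x : X | JRecurrent φ J x} := by
  set R := {x : X | JRecurrent φ J x} with hR
  have hRinv : ∀ n : Fin d → ℕ, phiIter φ n '' closure R ⊆ closure R := by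
    intro n
    have h1 : phiIter φ n '' R ⊆ R := by
      rintro _ ⟨x, hx, rfl⟩; exact jrecurrent_invariant hcont hcomm n hx
    exact (image_closure_subset_closure_image (continuous_phiIter φ hcont n)).trans
      (closure_mono h1)
  refine ⟨isClosed_closure, hRinv, ?_, ?_⟩
  · apply Set.eq_of_subset_of_subset (fun y hy => hy.1)
    intro y hy
    refine ⟨hy, fun V hV hyV => ?_⟩
    obtain ⟨x, hxV, hxR⟩ : (V ∩ R).Nonempty := mem_closure_iff.mp hy V hV hyV
    have hxR' := hxR
    obtain ⟨n, hmono, htend⟩ := hxR'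
    obtain ⟨k, hkV, hk1⟩ :=
      ((htend.eventually (hV.mem_nhds hxV)).and (eventually_ge_atTop 1)).exists
    refine ⟨n k, fun j hj => ?_,
      x, ⟨hxV, subset_closure hxR⟩, hkV, hRinv (n k) (mem_image_of_mem _ (subset_closure hxR))⟩
    exact lt_of_le_of_lt (Nat.zero_le (n 0 j)) (hmono j hj (by omega : (0:ℕ) < k))
  · intro Y hY hinv hNJ
    letI : MetricSpace X := TopologicalSpace.metrizableSpaceMetric X
    haveI : LocallyCompactSpace ↥Y := hY.locallyCompactSpace
    intro y hy
    set O : ℕ → Set X := fun m => ⋃ n ∈ {n : Fin d → ℕ | ∀ j ∈ J, m + 1 ≤ n j},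
      {x | dist (phiIter φ n x) x < 1 / (m + 1)} with hO
    have hOopen : ∀ m, IsOpen (O m) := by
      intro m
      refine isOpen_biUnion fun n _ => ?_
      exact isOpen_lt ((continuous_phiIter φ hcont n).dist continuous_id) continuous_const
    set S : ℕ → Set ↥Y := fun m => Subtype.val ⁻¹' O m with hS
    have hSopen : ∀ m, IsOpen (S m) := fun m => (hOopen m).preimage continuous_subtype_val
    have hSdense : ∀ m, Dense (S m) := by
      intro m
      rw [Metric.dense_iff]
      intro x r hr
      set δ := min r (1 / (2 * (m + 1))) with hδ
      have hδ0 : 0 < δ := lt_min hr (by positivity)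
      obtain ⟨n, hn, z, ⟨hzU, hzY⟩, hfzU, hfzY⟩ :=
        returns hcont hcomm Y hinv hNJ Metric.isOpen_ball
          ⟨(x : X), Metric.mem_ball_self hδ0, x.2⟩ (m + 1)
      have hdz : dist (phiIter φ n z) z < 1 / (m + 1) := by
        have h1 : dist z (x : X) < δ := Metric.mem_ball.mp hzU
        have h2 : dist (phiIter φ n z) (x : X) < δ := Metric.mem_ball.mp hfzU
        have h3 : δ ≤ 1 / (2 * ((m : ℝ) + 1)) := min_le_right _ _
        have hm : (0:ℝ) < (m : ℝ) + 1 := by positivity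
        calc dist (phiIter φ n z) z ≤ dist (phiIter φ n z) (x : X) + dist (x : X) z :=
              dist_triangle _ _ _
          _ < δ + δ := add_lt_add h2 (by rwa [dist_comm])
          _ ≤ 1 / (2 * ((m : ℝ) + 1)) + 1 / (2 * ((m : ℝ) + 1)) := add_le_add h3 h3
          _ = 1 / ((m : ℝ) + 1) := by rw [div_add_div _ _ (by positivity) (by positivity), div_eq_div_iff (by positivity) (by positivity)]; ring
      refine ⟨⟨z, hzY⟩, ?_, ?_⟩
      · rw [Metric.mem_ball, Subtype.dist_eq]
        exact lt_of_lt_of_le (Metric.mem_ball.mp hzU) (min_le_left _ _)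
      · exact mem_biUnion hn hdz
    have hdense : Dense (⋂ m, S m) := dense_iInter_of_isOpen hSopen hSdense
    have hsub : (⋂ m, S m) ⊆ Subtype.val ⁻¹' R := by
      intro x hx
      refine jrecurrent_of_small_returns φ J (x : X) fun m => ?_
      obtain ⟨n, hn, hlt⟩ := mem_iUnion₂.mp (mem_iInter.mp hx m)
      exact ⟨n, hn, hlt⟩
    have hyc : (⟨y, hy⟩ : ↥Y) ∈ closure (Subtype.val ⁻¹' R) :=
      closure_mono hsub (hdense.closure_eq ▸ mem_univ _)
    exact map_mem_closure continuous_subtype_val hyc fun a ha => ha
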